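/- Let B be a commutative ring, t ∈ B nilpotent, M = ⊕_{i=0}^{N} M_i a graded B-module on which multiplication by t raises degree by one (t·M_i ⊆ M_{i+1}, t·M_N = 0). Let D : M → M be the B-linear 'dual' map acting by (-1)^i on M_i, T : M → M the 'tensor' map acting by (1+t)^(-i) on M_i, and for n ∈ ℤ set i_n(α) = (1+t)^n · T(D(α)). Then i_n ∘ i_n = id_M. -/

import Mathlib

/-- General module-theoretic form of Fullwood's involution: with `M = ⊕_{i=0}^N M_i` a
graded module over `B`, `t ∈ B` nilpotent raising the grading by one (killing top
degree), `v = 1 + t` a unit, `D` acting by `(-1)^i` and `T` by `(1+t)^(-i)` on `M_i`,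
the map `i_n(α) = (1+t)^n · T(D(α))` satisfies `i_n ∘ i_n = id`. -/
theorem stmt_15 (B : Type*) [CommRing B] (M : Type*) [AddCommGroup M] [Module B M]
    (N : ℕ) (P : ℕ → Submodule B M)
    (hdec : DirectSum.IsInternal fun i => P i)
    (htop : ∀ i, N < i → P i = ⊥)
    (t : B) (ht : IsNilpotent t) (v : Bˣ) (hv : (v : B) = 1 + t)
    (hraise : ∀ i, ∀ α ∈ P i, t • α ∈ P (i + 1))
    (D T : M →ₗ[B] M)
    (hD : ∀ i, ∀ α ∈ P i, D α = ((-1 : B) ^ i) • α)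
    (hT : ∀ i, ∀ α ∈ P i, T α = (((v⁻¹ : Bˣ) : B)) ^ i • α)
    (n : ℤ) (i : M → M)
    (hi : ∀ α, i α = ((v ^ n : Bˣ) : B) • T (D α)) :
    ∀ α, i (i α) = α := by
  set S : M →ₗ[B] M := T.comp D with hS
  have hSapp : ∀ α : M, S α = T (D α) := fun α => rfl
  have hinv : ((v⁻¹ : Bˣ) : B) * (1 + t) = 1 := by rw [← hv]; exact v.inv_mul
  have hmulinv : ((v : B)) * ((v⁻¹ : Bˣ) : B) = 1 := v.mul_inv
  -- action of S on homogeneous elements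
  have l0 : ∀ k, ∀ α ∈ P k, S α = ((-1 : B) ^ k * ((v⁻¹ : Bˣ) : B) ^ k) • α := by
    intro k α hα
    have h1 : D α = ((-1 : B) ^ k) • α := hD k α hα
    have h2 : ((-1 : B) ^ k) • α ∈ P k := Submodule.smul_mem _ _ hα
    rw [hSapp, h1, map_smul, hT k α hα, smul_smul]
  have top : (⨆ k, P k) = (⊤ : Submodule B M) := hdec.submodule_iSup_eq_top
  -- twisted commutation, homogeneous case
  have l1 : ∀ β : M, S ((v : B) • β) = ((v⁻¹ : Bˣ) : B) • S β := by
    intro β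
    have hβ : β ∈ (⊤ : Submodule B M) := trivial
    rw [← top] at hβ
    refine Submodule.iSup_induction (motive := fun x => S ((v : B) • x) = ((v⁻¹ : Bˣ) : B) • S x)
      (fun k => P k) hβ ?_ ?_ ?_
    · intro k β hβk
      have hstep : (v : B) • β = β + t • β := by
        rw [hv, add_smul, one_smul]
      rw [hstep, map_add, l0 k β hβk, l0 (k + 1) (t • β) (hraise k β hβk), smul_smul,
        smul_smul, ← add_smul]
      congr 1
      linear_combination (-((-1 : B) ^ k * ((v⁻¹ : Bˣ) : B) ^ k)) * hinv
    · simp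
    · intro x y hx hy
      rw [smul_add, map_add, map_add, hx, hy, smul_add]
  have l1inv : ∀ β : M, S (((v⁻¹ : Bˣ) : B) • β) = (v : B) • S β := by
    intro β
    have := l1 (((v⁻¹ : Bˣ) : B) • β)
    rw [smul_smul, hmulinv, one_smul] at this
    rw [this, smul_smul, hmulinv, one_smul]
  -- twisted commutation for integer powers
  have l1' : ∀ m : ℤ, ∀ β : M, S (((v ^ m : Bˣ) : B) • β) = ((v ^ (-m) : Bˣ) : B) • S β := by
    intro m
    induction m using Int.induction_on with
    | zero => simp
    | succ m ih =>
      intro β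
      have e1 : (v ^ ((m : ℤ) + 1) : Bˣ) = v ^ (m : ℤ) * v := by
        rw [zpow_add_one]
      have e2 : (v ^ (-((m : ℤ) + 1)) : Bˣ) = v⁻¹ * v ^ (-(m : ℤ)) := by
        rw [neg_add, zpow_add, zpow_neg_one, mul_comm]
      rw [e1, e2, Units.val_mul, Units.val_mul, mul_smul, ih, l1, smul_smul,
        mul_comm (((v ^ (-(m : ℤ)) : Bˣ) : B)) (((v⁻¹ : Bˣ) : B))]
    | pred m ih =>
      intro β
      have e1 : (v ^ (-(m : ℤ) - 1) : Bˣ) = v ^ (-(m : ℤ)) * v⁻¹ := by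
        rw [sub_eq_add_neg, zpow_add, zpow_neg_one]
      have e2 : (v ^ (-(-(m : ℤ) - 1)) : Bˣ) = v * v ^ ((m : ℤ)) := by
        rw [neg_sub, sub_neg_eq_add, zpow_add, zpow_one]
      rw [e1, e2, Units.val_mul, Units.val_mul, mul_smul, ih, l1inv, neg_neg, smul_smul,
        mul_comm (((v ^ (m : ℤ) : Bˣ) : B)) ((v : B))]
  -- S is an involution
  have l2 : ∀ α : M, S (S α) = α := by
    intro α
    have hα : α ∈ (⊤ : Submodule B M) := trivial
    rw [← top] at hα
    refine Submodule.iSup_induction (motive := fun x => S (S x) = x) (fun k => P k) hα ?_ ?_ ?_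
    · intro k α hαk
      have e0 : ((v⁻¹ : Bˣ) : B) ^ k = ((v ^ (-(k : ℤ)) : Bˣ) : B) := by
        rw [zpow_neg, zpow_natCast, ← inv_pow, Units.val_pow_eq_pow_val]
      rw [l0 k α hαk, mul_smul, e0, map_smul, l1' (-(k : ℤ)), neg_neg, l0 k α hαk,
        smul_smul, smul_smul]
      have key : (-1 : B) ^ k * ((v ^ (k : ℤ) : Bˣ) : B) * ((-1 : B) ^ k *
          ((v⁻¹ : Bˣ) : B) ^ k) = 1 := by
        have e1 : ((v ^ (k : ℤ) : Bˣ) : B) = (v : B) ^ k := by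
          rw [zpow_natCast, Units.val_pow_eq_pow_val]
        have hsq : ((-1 : B)) ^ (k + k) = 1 := Even.neg_one_pow ⟨k, rfl⟩
        rw [e1]
        calc (-1 : B) ^ k * (v : B) ^ k * ((-1 : B) ^ k * ((v⁻¹ : Bˣ) : B) ^ k)
            = ((v : B) * ((v⁻¹ : Bˣ) : B)) ^ k * (-1 : B) ^ (k + k) := by
              rw [mul_pow, pow_add]; ring
          _ = 1 := by rw [hmulinv, hsq, one_pow, one_mul]
      rw [key, one_smul]
    · simp
    · intro x y hx hy
      rw [map_add, map_add, hx, hy]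
  -- conclude
  intro α
  rw [hi, hi α, ← hSapp, ← hSapp, l1' n, smul_smul, ← Units.val_mul, ← zpow_add,
    add_neg_cancel, zpow_zero, Units.val_one, one_smul, l2]
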